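/- Let Γ(ρ) > 0 be the unique positive solution of Γ = 1/(ρ + βω_c/(1+ω_cΓ) + βω_d/(1+ω_dΓ)) for ρ > 0, β, ω_d, ω_c > 0. Then Γ is differentiable and −dΓ/dρ = Γ/(ρ + βω_c/(1+ω_cΓ)² + βω_d/(1+ω_dΓ)²) > 0; in particular Γ is strictly decreasing in ρ. -/

import Mathlib

set_option maxHeartbeats 1000000 in
theorem cbf_gamma_derivative (β ωd ωc : ℝ) (hβ : 0 < β) (hωd : 0 < ωd) (hωc : 0 < ωc)
    (Γ : ℝ → ℝ)
    (hΓ : ∀ ρ : ℝ, 0 < ρ → 0 < Γ ρ ∧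
      Γ ρ = 1 / (ρ + β * ωc / (1 + ωc * Γ ρ) + β * ωd / (1 + ωd * Γ ρ))) :
    (∀ ρ : ℝ, 0 < ρ → DifferentiableAt ℝ Γ ρ ∧
      -deriv Γ ρ =
        Γ ρ / (ρ + β * ωc / (1 + ωc * Γ ρ) ^ 2 + β * ωd / (1 + ωd * Γ ρ) ^ 2) ∧
      0 < -deriv Γ ρ) ∧
    StrictAntiOn Γ (Set.Ioi 0) := by
  -- basic identity
  have hE : ∀ ρ : ℝ, 0 < ρ →
      ρ * Γ ρ + β * ωc * Γ ρ / (1 + ωc * Γ ρ) + β * ωd * Γ ρ / (1 + ωd * Γ ρ) = 1 := by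
    intro ρ hρ
    obtain ⟨hg, heq⟩ := hΓ ρ hρ
    have h1 : 0 < 1 + ωc * Γ ρ := by positivity
    have h2 : 0 < 1 + ωd * Γ ρ := by positivity
    have hD : 0 < ρ + β * ωc / (1 + ωc * Γ ρ) + β * ωd / (1 + ωd * Γ ρ) := by positivity
    rw [eq_div_iff (ne_of_gt hD)] at heq
    calc ρ * Γ ρ + β * ωc * Γ ρ / (1 + ωc * Γ ρ) + β * ωd * Γ ρ / (1 + ωd * Γ ρ)
        = Γ ρ * (ρ + β * ωc / (1 + ωc * Γ ρ) + β * ωd / (1 + ωd * Γ ρ)) := by ring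
      _ = 1 := heq
  -- the fixed point satisfies ρ = R (Γ ρ)
  have hR : ∀ ρ : ℝ, 0 < ρ →
      1 / Γ ρ - β * ωc / (1 + ωc * Γ ρ) - β * ωd / (1 + ωd * Γ ρ) = ρ := by
    intro ρ hρ
    have hg := (hΓ ρ hρ).1
    have h1 : 0 < 1 + ωc * Γ ρ := by positivity
    have h2 : 0 < 1 + ωd * Γ ρ := by positivity
    have e := hE ρ hρ
    field_simp at e ⊢
    linear_combination -e
  -- monotonicity of t ↦ β ω t / (1 + ω t)
  have hmono : ∀ ω : ℝ, 0 < ω → ∀ x y : ℝ, 0 < x → x ≤ y →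
      β * ω * x / (1 + ω * x) ≤ β * ω * y / (1 + ω * y) := by
    intro ω hω x y hx hxy
    have h1 : 0 < 1 + ω * x := by positivity
    have h2 : 0 < 1 + ω * y := by nlinarith
    rw [div_le_div_iff₀ h1 h2]
    nlinarith [mul_nonneg (mul_pos hβ hω).le (sub_nonneg.2 hxy)]
  -- strict antitonicity
  have hanti : StrictAntiOn Γ (Set.Ioi 0) := by
    intro ρ1 h1 ρ2 h2 h12
    simp only [Set.mem_Ioi] at h1 h2
    by_contra hle
    push_neg at hle
    have hg1 := (hΓ ρ1 h1).1
    have hg2 := (hΓ ρ2 h2).1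
    have e1 := hE ρ1 h1
    have e2 := hE ρ2 h2
    have m1 := hmono ωc hωc (Γ ρ1) (Γ ρ2) hg1 hle
    have m2 := hmono ωd hωd (Γ ρ1) (Γ ρ2) hg1 hle
    nlinarith [mul_nonneg h2.le (sub_nonneg.2 hle), mul_pos (sub_pos.2 h12) hg1]
  -- Lipschitz-type estimate
  have hlip : ∀ ρ ρ' : ℝ, 0 < ρ → 0 < ρ' → |Γ ρ - Γ ρ'| ≤ |ρ - ρ'| / (ρ * ρ') := by
    have key : ∀ ρ ρ' : ℝ, 0 < ρ → 0 < ρ' → Γ ρ' ≤ Γ ρ → Γ ρ - Γ ρ' ≤ |ρ - ρ'| / (ρ * ρ') := by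
      intro ρ ρ' hρ hρ' hgle
      have hρle : ρ ≤ ρ' := by
        by_contra hlt
        push_neg at hlt
        have := hanti (Set.mem_Ioi.2 hρ') (Set.mem_Ioi.2 hρ) hlt
        linarith
      have hg1 := (hΓ ρ hρ).1
      have hg2 := (hΓ ρ' hρ').1
      have hc1 : 0 < 1 + ωc * Γ ρ := by positivity
      have hd1 : 0 < 1 + ωd * Γ ρ := by positivity
      have hc2 : 0 < 1 + ωc * Γ ρ' := by positivity
      have hd2 : 0 < 1 + ωd * Γ ρ' := by positivity
      have e1 := hE ρ hρ
      have e2 := hE ρ' hρ'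
      have m1 := hmono ωc hωc (Γ ρ') (Γ ρ) hg2 hgle
      have m2 := hmono ωd hωd (Γ ρ') (Γ ρ) hg2 hgle
      have hA : 0 ≤ β * ωc * Γ ρ / (1 + ωc * Γ ρ) := by positivity
      have hB : 0 ≤ β * ωd * Γ ρ / (1 + ωd * Γ ρ) := by positivity
      have t1 : ρ' * (ρ * Γ ρ + β * ωc * Γ ρ / (1 + ωc * Γ ρ)
          + β * ωd * Γ ρ / (1 + ωd * Γ ρ)) = ρ' * 1 := by rw [e1]
      have t2 : ρ * (ρ' * Γ ρ' + β * ωc * Γ ρ' / (1 + ωc * Γ ρ')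
          + β * ωd * Γ ρ' / (1 + ωd * Γ ρ')) = ρ * 1 := by rw [e2]
      have s1 : ρ * (β * ωc * Γ ρ' / (1 + ωc * Γ ρ')) ≤ ρ * (β * ωc * Γ ρ / (1 + ωc * Γ ρ)) :=
        mul_le_mul_of_nonneg_left m1 hρ.le
      have s2 : ρ * (β * ωd * Γ ρ' / (1 + ωd * Γ ρ')) ≤ ρ * (β * ωd * Γ ρ / (1 + ωd * Γ ρ)) :=
        mul_le_mul_of_nonneg_left m2 hρ.le
      have s3 : (ρ - ρ') * (β * ωc * Γ ρ / (1 + ωc * Γ ρ)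
          + β * ωd * Γ ρ / (1 + ωd * Γ ρ)) ≤ 0 := by nlinarith
      have habs : ρ' - ρ ≤ |ρ - ρ'| := by rw [abs_sub_comm]; exact le_abs_self _
      rw [le_div_iff₀ (by positivity)]
      nlinarith [t1, t2, s1, s2, s3, habs]
    intro ρ ρ' hρ hρ'
    rcases le_total (Γ ρ') (Γ ρ) with h | h
    · rw [abs_of_nonneg (by linarith)]
      exact key ρ ρ' hρ hρ' h
    · rw [abs_of_nonpos (by linarith)]
      have := key ρ' ρ hρ' hρ h
      rw [abs_sub_comm] at this
      calc -(Γ ρ - Γ ρ') = Γ ρ' - Γ ρ := by ring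
        _ ≤ |ρ - ρ'| / (ρ' * ρ) := this
        _ = |ρ - ρ'| / (ρ * ρ') := by rw [mul_comm]
  refine ⟨?_, hanti⟩
  intro ρ₀ hρ₀
  set g₀ := Γ ρ₀ with hg₀def
  have hg₀ := (hΓ ρ₀ hρ₀).1
  have h1 : 0 < 1 + ωc * g₀ := by positivity
  have h2 : 0 < 1 + ωd * g₀ := by positivity
  -- continuity at ρ₀
  have hb : Filter.Tendsto (fun ρ : ℝ => |ρ - ρ₀| / (ρ₀ / 2 * ρ₀)) (nhds ρ₀) (nhds 0) := by
    have hc : Continuous fun ρ : ℝ => |ρ - ρ₀| / (ρ₀ / 2 * ρ₀) := by fun_prop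
    simpa using hc.tendsto ρ₀
  have hcont : ContinuousAt Γ ρ₀ := by
    rw [ContinuousAt, tendsto_iff_dist_tendsto_zero]
    refine squeeze_zero' (Filter.Eventually.of_forall fun _ => dist_nonneg) ?_ hb
    have hev : ∀ᶠ ρ in nhds ρ₀, ρ₀ / 2 < ρ := eventually_gt_nhds (by linarith)
    refine hev.mono fun ρ hρ => ?_
    have hρpos : 0 < ρ := by linarith
    rw [Real.dist_eq]
    calc |Γ ρ - Γ ρ₀| ≤ |ρ - ρ₀| / (ρ * ρ₀) := hlip ρ ρ₀ hρpos hρ₀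
      _ ≤ |ρ - ρ₀| / (ρ₀ / 2 * ρ₀) := by
          apply div_le_div_of_nonneg_left (abs_nonneg _) (by positivity)
          nlinarith
  -- derivative of the inverse map R at g₀
  set S : ℝ := ρ₀ + β * ωc / (1 + ωc * g₀) ^ 2 + β * ωd / (1 + ωd * g₀) ^ 2 with hSdef
  have hS : 0 < S := by positivity
  have hρ₀eq : ρ₀ = 1 / g₀ - β * ωc / (1 + ωc * g₀) - β * ωd / (1 + ωd * g₀) :=
    (hR ρ₀ hρ₀).symm
  have hRd : HasDerivAt (fun g => 1 / g - β * ωc / (1 + ωc * g) - β * ωd / (1 + ωd * g))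
      (-S / g₀) g₀ := by
    have d1 : HasDerivAt (fun g : ℝ => 1 / g) (-(g₀ ^ 2)⁻¹) g₀ := by
      simpa [one_div] using hasDerivAt_inv (ne_of_gt hg₀)
    have dc : HasDerivAt (fun g : ℝ => 1 + ωc * g) ωc g₀ := by
      simpa using ((hasDerivAt_id g₀).const_mul ωc).const_add 1
    have dd : HasDerivAt (fun g : ℝ => 1 + ωd * g) ωd g₀ := by
      simpa using ((hasDerivAt_id g₀).const_mul ωd).const_add 1
    have d2 : HasDerivAt (fun g : ℝ => β * ωc / (1 + ωc * g))
        (β * ωc * (-ωc / (1 + ωc * g₀) ^ 2)) g₀ := by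
      simpa [div_eq_mul_inv] using (dc.inv (ne_of_gt h1)).const_mul (β * ωc)
    have d3 : HasDerivAt (fun g : ℝ => β * ωd / (1 + ωd * g))
        (β * ωd * (-ωd / (1 + ωd * g₀) ^ 2)) g₀ := by
      simpa [div_eq_mul_inv] using (dd.inv (ne_of_gt h2)).const_mul (β * ωd)
    have hder := (d1.sub d2).sub d3
    refine hder.congr_deriv ?_
    rw [hSdef, hρ₀eq]
    field_simp [(show g₀ ≠ 0 from ne_of_gt hg₀), h1.ne', h2.ne', pow_ne_zero 2 h1.ne', pow_ne_zero 2 h2.ne']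
    have ec : g₀ * β * ωc / (1 + g₀ * ωc) = g₀ * β * ωc * (1 + g₀ * ωc) / (1 + g₀ * ωc) ^ 2 := by
      field_simp
    have ed : g₀ * β * ωd / (1 + g₀ * ωd) = g₀ * β * ωd * (1 + g₀ * ωd) / (1 + g₀ * ωd) ^ 2 := by
      field_simp
    rw [ec, ed]
    ring
  have hRinv : ∀ᶠ y in nhds ρ₀,
      (fun g => 1 / g - β * ωc / (1 + ωc * g) - β * ωd / (1 + ωd * g)) (Γ y) = y := by
    have hev : ∀ᶠ y in nhds ρ₀, 0 < y := eventually_gt_nhds hρ₀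
    exact hev.mono fun y hy => hR y hy
  have hSg : -S / g₀ ≠ 0 := by
    apply div_ne_zero _ (ne_of_gt hg₀)
    simpa using ne_of_gt hS
  have hΓd : HasDerivAt Γ (-S / g₀)⁻¹ ρ₀ :=
    HasDerivAt.of_local_left_inverse hcont hRd hSg hRinv
  have hderiv : deriv Γ ρ₀ = (-S / g₀)⁻¹ := hΓd.deriv
  have hval : -deriv Γ ρ₀ = g₀ / S := by
    rw [hderiv]
    field_simp
  refine ⟨hΓd.differentiableAt, ?_, ?_⟩
  · rw [hval]
  · rw [hval]; positivity
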